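/- The polynomials g_1,…,g_{r−c} form a regular sequence in the polynomial ring 𝕂[T_{ij},S_k]; in particular, the quotient R = 𝕂[T_{ij},S_k]/⟨g_1,…,g_{r−c}⟩ is a complete intersection ring. -/

import Mathlib

open MvPolynomial

noncomputable section

/-- Index type for the variables `T i j` (`Sum.inl ⟨i, j⟩`) and `S k` (`Sum.inr k`). -/
abbrev VarIdx (r m : ℕ) (nn : Fin (r + 1) → ℕ) : Type :=
  (Σ i : Fin (r + 1), Fin (nn i)) ⊕ Fin m

variable (𝕂 : Type) [Field 𝕂]

/-- The monomial `T_i^{l_i} = ∏_j T_{ij}^{l_{ij}}`. -/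
def Tmon (r m : ℕ) (nn : Fin (r + 1) → ℕ)
    (l : ∀ i : Fin (r + 1), Fin (nn i) → ℕ) (i : Fin (r + 1)) :
    MvPolynomial (VarIdx r m nn) 𝕂 :=
  ∏ j : Fin (nn i), (X (Sum.inl ⟨i, j⟩) : MvPolynomial (VarIdx r m nn) 𝕂) ^ l i j

/-- The map sending a column index of the `(c+2)×(c+2)` matrix defining `g_t`
to the corresponding column index of `A`, namely `0, …, c, c + (t+1)`. -/
def colOf (r c : ℕ) (hcr : c ≤ r) (t : Fin (r - c)) (p : Fin (c + 2)) : Fin (r + 1) :=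
  if h : (p : ℕ) ≤ c then ⟨p, by omega⟩
  else ⟨c + 1 + t, by have := t.isLt; omega⟩

/-- The polynomial `g_t`: the determinant of the `(c+2)×(c+2)` matrix whose first
`c+1` rows are formed by the columns `a_0, …, a_c, a_{c+t}` of `A` (as constant
polynomials) and whose last row is `(T_0^{l_0}, …, T_c^{l_c}, T_{c+t}^{l_{c+t}})`. -/
def gPoly (r c m : ℕ) (hcr : c ≤ r) (nn : Fin (r + 1) → ℕ)
    (l : ∀ i : Fin (r + 1), Fin (nn i) → ℕ)
    (A : Matrix (Fin (c + 1)) (Fin (r + 1)) 𝕂) (t : Fin (r - c)) :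
    MvPolynomial (VarIdx r m nn) 𝕂 :=
  Matrix.det (Matrix.of fun q p : Fin (c + 2) =>
    if h : (q : ℕ) < c + 1 then C (A ⟨q, h⟩ (colOf r c hcr t p))
    else Tmon 𝕂 r m nn l (colOf r c hcr t p))

/-- The ring `R = 𝕂[T_{ij}, S_k] / ⟨g_1, …, g_{r-c}⟩`. -/
abbrev RingAP (r c m : ℕ) (hcr : c ≤ r) (nn : Fin (r + 1) → ℕ)
    (l : ∀ i : Fin (r + 1), Fin (nn i) → ℕ)
    (A : Matrix (Fin (c + 1)) (Fin (r + 1)) 𝕂) : Type :=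
  MvPolynomial (VarIdx r m nn) 𝕂 ⧸ Ideal.span (Set.range (gPoly 𝕂 r c m hcr nn l A))

end

/-! ### Auxiliary lemmas -/

noncomputable section AuxST3

section Aux

variable {τ B : Type*} [CommRing B]

lemma aux_prod_monomial {ι : Type*} (s : Finset ι) (d : ι → τ →₀ ℕ) :
    (∏ i ∈ s, (monomial (d i) (1 : B))) = monomial (∑ i ∈ s, d i) 1 := by
  classical
  induction s using Finset.induction_on with
  | empty => simp
  | @insert a s ha ih =>
      rw [Finset.prod_insert ha, Finset.sum_insert ha, ih, monomial_mul, one_mul]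

lemma aux_mul_ne_zero (d : τ →₀ ℕ) (hd : d ≠ 0) {α : B} (hα : IsUnit α) (b : B)
    {f : MvPolynomial τ B} (hf : f ≠ 0) :
    (C α * monomial d 1 + C b) * f ≠ 0 := by
  classical
  intro h0
  have hsupp : f.support.Nonempty := support_nonempty.mpr hf
  obtain ⟨D, hD, hDdeg⟩ := Finset.exists_mem_eq_sup f.support hsupp fun s => s.sum fun _ e => e
  have hcoefD : coeff D f ≠ 0 := mem_support_iff.mp hD
  have hdpos : 0 < d.sum fun _ e => e := by
    rcases d.support.eq_empty_or_nonempty with h | ⟨x, hx⟩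
    · exact absurd (Finsupp.support_eq_empty.mp h) hd
    · calc 0 < d x := Nat.pos_of_ne_zero (Finsupp.mem_support_iff.mp hx)
        _ ≤ d.sum fun _ e => e :=
          Finset.single_le_sum (f := fun a => d a) (fun _ _ => Nat.zero_le _) hx
  have hDdeg' : f.totalDegree = D.sum fun _ e => e := by rw [totalDegree]; exact hDdeg
  have hsum : ((d + D).sum fun _ e => e) = (d.sum fun _ e => e) + D.sum fun _ e => e :=
    Finsupp.sum_add_index' (fun _ => rfl) (fun _ _ _ => rfl)
  have hlt : f.totalDegree < ∑ x ∈ (d + D).support, (d + D) x := by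
    have : (∑ x ∈ (d + D).support, (d + D) x) = (d + D).sum fun _ e => e := rfl
    rw [this, hsum, hDdeg']
    omega
  have hz : coeff (d + D) ((C α * monomial d 1 + C b) * f) = α * coeff D f := by
    rw [add_mul, coeff_add, C_mul_monomial, mul_one, coeff_monomial_mul, coeff_C_mul,
      coeff_eq_zero_of_totalDegree_lt hlt, mul_zero, add_zero]
  rw [h0, coeff_zero] at hz
  exact hcoefD ((hα.mul_right_eq_zero).mp hz.symm)

lemma aux_mul_injective (d : τ →₀ ℕ) (hd : d ≠ 0) {α : B} (hα : IsUnit α) (b : B) :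
    Function.Injective fun f : MvPolynomial τ B => (C α * monomial d 1 + C b) * f := by
  intro x y hxy
  dsimp only at hxy
  by_contra hne
  exact aux_mul_ne_zero d hd hα b (sub_ne_zero.mpr hne) (by rw [mul_sub, hxy, sub_self])

lemma aux_transfer {R S : Type*} [CommRing R] [CommRing S] (e : R ≃+* S) (a : R)
    (h : Function.Injective fun x : S => e a * x) :
    Function.Injective fun x : R => a * x := by
  intro x y hxy
  dsimp only at hxy
  apply e.injective
  apply h
  dsimp only
  rw [← map_mul, ← map_mul]
  exact congrArg e hxy

lemma aux_smul_quot {R : Type*} [CommRing R] (J : Ideal R) (g : R)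
    (h : Function.Injective fun x : R ⧸ J => Ideal.Quotient.mk J g * x) :
    IsSMulRegular (R ⧸ (J • ⊤ : Submodule R R)) g := by
  have e : (J • (⊤ : Submodule R R)) = J := by
    rw [Ideal.smul_eq_mul, Ideal.mul_top]
  rw [e]
  intro x y hxy
  obtain ⟨x, rfl⟩ := Ideal.Quotient.mk_surjective x
  obtain ⟨y, rfl⟩ := Ideal.Quotient.mk_surjective y
  have key : ∀ z : R, g • (Ideal.Quotient.mk J z)
      = Ideal.Quotient.mk J g * Ideal.Quotient.mk J z :=
    fun z => by rw [← map_mul, ← smul_eq_mul]; rfl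
  apply h
  dsimp only
  rw [← key, ← key]
  exact hxy

lemma aux_qeq_symm {σ R : Type*} [CommRing R] (I : Ideal R) (y : MvPolynomial σ R) :
    (MvPolynomial.quotientEquivQuotientMvPolynomial I (σ := σ)).symm
        (Ideal.Quotient.mk _ y) = MvPolynomial.map (Ideal.Quotient.mk I) y := by
  rw [AlgEquiv.symm_apply_eq]
  induction y using MvPolynomial.induction_on with
  | C a => simp [quotientEquivQuotientMvPolynomial]
  | add p q hp hq => rw [map_add, map_add, map_add, hp, hq]
  | mul_X p i hp => rw [map_mul, map_mul, map_mul, hp]; simp [quotientEquivQuotientMvPolynomial]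

end Aux

section DetLemma

variable (𝕂 : Type) [Field 𝕂] (r c : ℕ) (hcr : c ≤ r)
  (A : Matrix (Fin (c + 1)) (Fin (r + 1)) 𝕂)

lemma det_first_cols_ne_zero
    (hA : ∀ s : Finset (Fin (r + 1)), s.card = c + 1 →
      LinearIndependent 𝕂 fun j : s => A.transpose (j : Fin (r + 1))) :
    Matrix.det (Matrix.of fun q p : Fin (c + 1) => A q (Fin.castLE (by omega) p)) ≠ 0 := by
  set M : Matrix (Fin (c + 1)) (Fin (c + 1)) 𝕂 :=
    Matrix.of fun q p : Fin (c + 1) => A q (Fin.castLE (by omega) p) with hM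
  have hinj : Function.Injective (Fin.castLE (show c + 1 ≤ r + 1 by omega)) :=
    Fin.castLE_injective _
  set s : Finset (Fin (r + 1)) := Finset.univ.map ⟨Fin.castLE (by omega), hinj⟩ with hs
  have hcard : s.card = c + 1 := by simp [hs]
  have li := hA s hcard
  have hmem : ∀ p : Fin (c + 1), Fin.castLE (show c + 1 ≤ r + 1 by omega) p ∈ s := by
    intro p; simp [hs]
  have li2 : LinearIndependent 𝕂 fun p : Fin (c + 1) =>
      A.transpose (Fin.castLE (show c + 1 ≤ r + 1 by omega) p) :=
    li.comp (fun p : Fin (c + 1) => (⟨Fin.castLE (by omega) p, hmem p⟩ : s))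
      (fun p q hpq => hinj (congrArg Subtype.val hpq))
  have li3 : LinearIndependent 𝕂 fun p : Fin (c + 1) => M.transpose p := by
    have he : (fun p : Fin (c + 1) => M.transpose p) = fun p : Fin (c + 1) =>
        A.transpose (Fin.castLE (show c + 1 ≤ r + 1 by omega) p) := by
      funext p
      ext q
      simp [hM, Matrix.transpose_apply]
    rw [he]
    exact li2
  have hu : IsUnit M := Matrix.linearIndependent_cols_iff_isUnit.mp li3
  exact ((Matrix.isUnit_iff_isUnit_det M).mp hu).ne_zero

end DetLemma

section Main

variable (𝕂 : Type) [Field 𝕂] (r c m : ℕ) (hcr : c ≤ r) (nn : Fin (r + 1) → ℕ)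
  (l : ∀ i : Fin (r + 1), Fin (nn i) → ℕ)
  (A : Matrix (Fin (c + 1)) (Fin (r + 1)) 𝕂)

/-- The cofactor coefficients of `gPoly` along the last row. -/
def kap (t : Fin (r - c)) (j : Fin (c + 2)) : 𝕂 :=
  (-1) ^ (c + 1 + (j : ℕ)) * Matrix.det (Matrix.of fun q p : Fin (c + 1) =>
    A q (colOf r c hcr t (j.succAbove p)))

lemma colOf_val_le (t : Fin (r - c)) (p : Fin (c + 2)) (hp : (p : ℕ) ≤ c) :
    (colOf r c hcr t p : ℕ) = p := by
  rw [colOf, dif_pos hp]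

lemma colOf_val_gt (t : Fin (r - c)) (p : Fin (c + 2)) (hp : ¬ (p : ℕ) ≤ c) :
    (colOf r c hcr t p : ℕ) = c + 1 + t := by
  rw [colOf, dif_neg hp]

lemma gPoly_eq_sum (t : Fin (r - c)) :
    gPoly 𝕂 r c m hcr nn l A t =
      ∑ j : Fin (c + 2), C (kap 𝕂 r c hcr A t j) * Tmon 𝕂 r m nn l (colOf r c hcr t j) := by
  rw [gPoly, Matrix.det_succ_row _ (Fin.last (c + 1))]
  refine Finset.sum_congr rfl fun j _ => ?_
  have h1 : (Matrix.of fun q p : Fin (c + 2) =>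
      if h : (q : ℕ) < c + 1 then C (A ⟨q, h⟩ (colOf r c hcr t p))
      else Tmon 𝕂 r m nn l (colOf r c hcr t p)) (Fin.last (c + 1)) j
        = Tmon 𝕂 r m nn l (colOf r c hcr t j) := by
    rw [Matrix.of_apply, dif_neg (by simp)]
  have h2 : ((Matrix.of fun q p : Fin (c + 2) =>
      if h : (q : ℕ) < c + 1 then C (A ⟨q, h⟩ (colOf r c hcr t p))
      else Tmon 𝕂 r m nn l (colOf r c hcr t p)).submatrix
        (Fin.last (c + 1)).succAbove j.succAbove)
      = (C : 𝕂 →+* MvPolynomial (VarIdx r m nn) 𝕂).mapMatrix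
          (Matrix.of fun q p : Fin (c + 1) => A q (colOf r c hcr t (j.succAbove p))) := by
    ext q p
    rw [Matrix.submatrix_apply, Fin.succAbove_last, Matrix.of_apply,
      dif_pos (by simpa using q.isLt)]
    simp
  rw [h1, h2, ← RingHom.map_det, kap, map_mul]
  have h3 : (C ((-1 : 𝕂) ^ (c + 1 + (j : ℕ))) : MvPolynomial (VarIdx r m nn) 𝕂)
      = (-1) ^ (c + 1 + (j : ℕ)) := by
    rw [map_pow, map_neg, map_one]
  rw [h3, Fin.val_last]
  ring

end Main

section Step


/-- predicate selecting the variables of block `i0` -/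
def stepP (r m : ℕ) (nn : Fin (r + 1) → ℕ) (i0 : Fin (r + 1)) : VarIdx r m nn → Prop :=
  Sum.elim (fun y => y.1 = i0) (fun _ => False)

/-- the splitting ring equivalence -/
def stepPhi (𝕂 : Type) [Field 𝕂] (r m : ℕ) (nn : Fin (r + 1) → ℕ) (i0 : Fin (r + 1)) :
    MvPolynomial (VarIdx r m nn) 𝕂 ≃+*
      MvPolynomial {x // stepP r m nn i0 x}
        (MvPolynomial {x // ¬ stepP r m nn i0 x} 𝕂) :=
  letI := Classical.decPred (stepP r m nn i0)
  ((renameEquiv 𝕂 (Equiv.sumCompl (stepP r m nn i0)).symm).trans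
    (sumAlgEquiv 𝕂 _ _)).toRingEquiv

lemma stepPhi_C (𝕂 : Type) [Field 𝕂] (r m : ℕ) (nn : Fin (r + 1) → ℕ) (i0 : Fin (r + 1))
    (a : 𝕂) : stepPhi 𝕂 r m nn i0 (C a) = C (C a) := by
  letI := Classical.decPred (stepP r m nn i0)
  simp [stepPhi, sumToIter_C]

lemma stepPhi_X_pos (𝕂 : Type) [Field 𝕂] (r m : ℕ) (nn : Fin (r + 1) → ℕ) (i0 : Fin (r + 1))
    (x : VarIdx r m nn) (hx : stepP r m nn i0 x) :
    stepPhi 𝕂 r m nn i0 (X x) = X ⟨x, hx⟩ := by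
  letI := Classical.decPred (stepP r m nn i0)
  simp only [stepPhi, AlgEquiv.toRingEquiv_eq_coe, AlgEquiv.coe_ringEquiv,
    AlgEquiv.trans_apply, renameEquiv_apply, rename_X]
  rw [Equiv.sumCompl_symm_apply_of_pos hx]
  simp [sumToIter_Xl]

lemma stepPhi_X_neg (𝕂 : Type) [Field 𝕂] (r m : ℕ) (nn : Fin (r + 1) → ℕ) (i0 : Fin (r + 1))
    (x : VarIdx r m nn) (hx : ¬ stepP r m nn i0 x) :
    stepPhi 𝕂 r m nn i0 (X x) = C (X ⟨x, hx⟩) := by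
  letI := Classical.decPred (stepP r m nn i0)
  simp only [stepPhi, AlgEquiv.toRingEquiv_eq_coe, AlgEquiv.coe_ringEquiv,
    AlgEquiv.trans_apply, renameEquiv_apply, rename_X]
  rw [Equiv.sumCompl_symm_apply_of_neg hx]
  simp [sumToIter_Xr]

def yvar (r m : ℕ) (nn : Fin (r + 1) → ℕ) (i0 : Fin (r + 1)) (j : Fin (nn i0)) :
    {x : VarIdx r m nn // stepP r m nn i0 x} :=
  ⟨Sum.inl ⟨i0, j⟩, rfl⟩

def ddOf (r m : ℕ) (nn : Fin (r + 1) → ℕ) (l : ∀ i : Fin (r + 1), Fin (nn i) → ℕ)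
    (i0 : Fin (r + 1)) : {x : VarIdx r m nn // stepP r m nn i0 x} →₀ ℕ :=
  ∑ j : Fin (nn i0), Finsupp.single (yvar r m nn i0 j) (l i0 j)

lemma yvar_injective (r m : ℕ) (nn : Fin (r + 1) → ℕ) (i0 : Fin (r + 1)) :
    Function.Injective (yvar r m nn i0) := by
  intro a b h
  have := congrArg Subtype.val h
  simpa [yvar] using this

lemma ddOf_apply (r m : ℕ) (nn : Fin (r + 1) → ℕ) (l : ∀ i : Fin (r + 1), Fin (nn i) → ℕ)
    (i0 : Fin (r + 1)) (j0 : Fin (nn i0)) :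
    ddOf r m nn l i0 (yvar r m nn i0 j0) = l i0 j0 := by
  classical
  rw [ddOf, Finsupp.finset_sum_apply]
  rw [Finset.sum_eq_single j0]
  · rw [Finsupp.single_apply, if_pos rfl]
  · intro j _ hj
    rw [Finsupp.single_apply, if_neg (fun h => hj (yvar_injective r m nn i0 h))]
  · intro h; exact absurd (Finset.mem_univ _) h

lemma ddOf_ne_zero (r m : ℕ) (nn : Fin (r + 1) → ℕ) (l : ∀ i : Fin (r + 1), Fin (nn i) → ℕ)
    (hnn : ∀ i, 0 < nn i) (hl : ∀ i j, 0 < l i j) (i0 : Fin (r + 1)) :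
    ddOf r m nn l i0 ≠ 0 := by
  intro h0
  have j0 : Fin (nn i0) := ⟨0, hnn i0⟩
  have h := ddOf_apply r m nn l i0 j0
  rw [h0, Finsupp.zero_apply] at h
  exact (hl i0 j0).ne' h.symm

lemma aux_take_set {α : Type*} {n : ℕ} (g : Fin n → α) (i : ℕ) :
    {x | x ∈ (List.ofFn g).take i} = g '' {t : Fin n | (t : ℕ) < i} := by
  ext x
  simp only [Set.mem_setOf_eq, Set.mem_image, List.mem_iff_getElem]
  constructor
  · rintro ⟨j, hj, rfl⟩
    have hj' : j < i ∧ j < n := by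
      simp only [List.length_take, List.length_ofFn] at hj
      omega
    exact ⟨⟨j, hj'.2⟩, hj'.1, by rw [List.getElem_take, List.getElem_ofFn]⟩
  · rintro ⟨t, ht, rfl⟩
    refine ⟨(t : ℕ), ?_, ?_⟩
    · simp only [List.length_take, List.length_ofFn]
      have := t.isLt
      omega
    · rw [List.getElem_take, List.getElem_ofFn]

lemma stepPhi_Tmon_ne (𝕂 : Type) [Field 𝕂] (r m : ℕ) (nn : Fin (r + 1) → ℕ)
    (l : ∀ i : Fin (r + 1), Fin (nn i) → ℕ) (i0 i' : Fin (r + 1)) (h : i' ≠ i0) :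
    stepPhi 𝕂 r m nn i0 (Tmon 𝕂 r m nn l i') ∈
      RingHom.range (C : MvPolynomial {x // ¬ stepP r m nn i0 x} 𝕂 →+*
        MvPolynomial {x // stepP r m nn i0 x} (MvPolynomial {x // ¬ stepP r m nn i0 x} 𝕂)) := by
  rw [Tmon, map_prod]
  refine prod_mem fun j _ => ?_
  rw [map_pow]
  refine pow_mem ?_ _
  have hx : ¬ stepP r m nn i0 (Sum.inl ⟨i', j⟩) := h
  rw [stepPhi_X_neg 𝕂 r m nn i0 _ hx]
  exact ⟨X _, rfl⟩

lemma stepPhi_Tmon_i0 (𝕂 : Type) [Field 𝕂] (r m : ℕ) (nn : Fin (r + 1) → ℕ)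
    (l : ∀ i : Fin (r + 1), Fin (nn i) → ℕ) (i0 : Fin (r + 1)) :
    stepPhi 𝕂 r m nn i0 (Tmon 𝕂 r m nn l i0) = monomial (ddOf r m nn l i0) 1 := by
  rw [Tmon, map_prod, ddOf, ← aux_prod_monomial]
  refine Finset.prod_congr rfl fun j _ => ?_
  rw [map_pow, stepPhi_X_pos 𝕂 r m nn i0 (Sum.inl ⟨i0, j⟩) rfl, X_pow_eq_monomial]
  rfl

lemma stepPhi_g_mem (𝕂 : Type) [Field 𝕂] (r c m : ℕ) (hcr : c ≤ r) (nn : Fin (r + 1) → ℕ)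
    (l : ∀ i : Fin (r + 1), Fin (nn i) → ℕ) (A : Matrix (Fin (c + 1)) (Fin (r + 1)) 𝕂)
    (i0 : Fin (r + 1)) (t : Fin (r - c)) (hcol : ∀ j, colOf r c hcr t j ≠ i0) :
    stepPhi 𝕂 r m nn i0 (gPoly 𝕂 r c m hcr nn l A t) ∈
      RingHom.range (C : MvPolynomial {x // ¬ stepP r m nn i0 x} 𝕂 →+*
        MvPolynomial {x // stepP r m nn i0 x} (MvPolynomial {x // ¬ stepP r m nn i0 x} 𝕂)) := by
  rw [gPoly_eq_sum, map_sum]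
  refine sum_mem fun j _ => ?_
  rw [map_mul, stepPhi_C]
  exact mul_mem ⟨C _, rfl⟩ (stepPhi_Tmon_ne 𝕂 r m nn l i0 _ (hcol j))

lemma step_regular (𝕂 : Type) [Field 𝕂] (r c m : ℕ) (hcr : c ≤ r) (nn : Fin (r + 1) → ℕ)
    (hnn : ∀ i, 0 < nn i)
    (l : ∀ i : Fin (r + 1), Fin (nn i) → ℕ) (hl : ∀ i j, 0 < l i j)
    (A : Matrix (Fin (c + 1)) (Fin (r + 1)) 𝕂)
    (hA : ∀ s : Finset (Fin (r + 1)), s.card = c + 1 →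
      LinearIndependent 𝕂 fun j : s => A.transpose (j : Fin (r + 1)))
    (i : ℕ) (hi : i < r - c) :
    IsSMulRegular
      ((MvPolynomial (VarIdx r m nn) 𝕂) ⧸
        (Ideal.ofList ((List.ofFn (gPoly 𝕂 r c m hcr nn l A)).take i) • ⊤ :
          Submodule (MvPolynomial (VarIdx r m nn) 𝕂) (MvPolynomial (VarIdx r m nn) 𝕂)))
      (gPoly 𝕂 r c m hcr nn l A ⟨i, hi⟩) := by
  classical
  have hi0lt : c + 1 + i < r + 1 := by omega
  set i0 : Fin (r + 1) := ⟨c + 1 + i, hi0lt⟩ with hi0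
  set g := gPoly 𝕂 r c m hcr nn l A with hgdef
  set φ := stepPhi 𝕂 r m nn i0 with hφdef
  set S : Set (Fin (r - c)) := {t | (t : ℕ) < i} with hS
  have hJ : Ideal.ofList ((List.ofFn g).take i) = Ideal.span (g '' S) := by
    rw [Ideal.ofList, aux_take_set]
  have hcol : ∀ t : Fin (r - c), (t : ℕ) ≠ i → ∀ j, colOf r c hcr t j ≠ i0 := by
    intro t ht j hEq
    have hv := congrArg Fin.val hEq
    by_cases hj : (j : ℕ) ≤ c
    · rw [colOf_val_le r c hcr t j hj] at hv
      simp only [hi0] at hv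
      omega
    · rw [colOf_val_gt r c hcr t j hj] at hv
      simp only [hi0] at hv
      omega
  have hmem : ∀ t ∈ S, φ (g t) ∈
      RingHom.range (C : MvPolynomial {x // ¬ stepP r m nn i0 x} 𝕂 →+*
        MvPolynomial {x // stepP r m nn i0 x}
          (MvPolynomial {x // ¬ stepP r m nn i0 x} 𝕂)) := by
    intro t ht
    exact stepPhi_g_mem 𝕂 r c m hcr nn l A i0 t (hcol t (Nat.ne_of_lt ht))
  set b : Fin (r - c) → MvPolynomial {x // ¬ stepP r m nn i0 x} 𝕂 := fun t =>
    if h : t ∈ S then (RingHom.mem_range.mp (hmem t h)).choose else 0 with hbdef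
  have himg : ⇑φ '' (g '' S) =
      ⇑(C : MvPolynomial {x // ¬ stepP r m nn i0 x} 𝕂 →+*
        MvPolynomial {x // stepP r m nn i0 x}
          (MvPolynomial {x // ¬ stepP r m nn i0 x} 𝕂)) '' (b '' S) := by
    rw [← Set.image_comp, ← Set.image_comp]
    apply Set.image_congr
    intro t ht
    simp only [Function.comp_apply, hbdef, dif_pos ht]
    exact ((RingHom.mem_range.mp (hmem t ht)).choose_spec).symm
  set I : Ideal (MvPolynomial {x // ¬ stepP r m nn i0 x} 𝕂) := Ideal.span (b '' S) with hI
  have hmapJ : Ideal.map (C : MvPolynomial {x // ¬ stepP r m nn i0 x} 𝕂 →+*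
        MvPolynomial {x // stepP r m nn i0 x}
          (MvPolynomial {x // ¬ stepP r m nn i0 x} 𝕂)) I =
      Ideal.map (φ : MvPolynomial (VarIdx r m nn) 𝕂 →+* _)
        (Ideal.ofList ((List.ofFn g).take i)) := by
    rw [hJ, hI, Ideal.map_span, Ideal.map_span]
    congr 1
    have hcoe : ⇑(φ : MvPolynomial (VarIdx r m nn) 𝕂 →+* _) = ⇑φ := rfl
    rw [hcoe, himg]
  set Ψ := (Ideal.quotientEquiv _ _ φ hmapJ).trans
    (quotientEquivQuotientMvPolynomial I (σ := {x // stepP r m nn i0 x})).symm.toRingEquiv with hΨdef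
  apply aux_smul_quot
  apply aux_transfer (S := MvPolynomial {x // stepP r m nn i0 x} (MvPolynomial {x // ¬ stepP r m nn i0 x} 𝕂 ⧸ I)) Ψ
  have hTi0 : colOf r c hcr ⟨i, hi⟩ (Fin.last (c + 1)) = i0 := by
    apply Fin.ext
    rw [colOf_val_gt r c hcr _ _ (by simp)]
  have hsum_mem : φ (∑ j : Fin (c + 1),
      C (kap 𝕂 r c hcr A ⟨i, hi⟩ j.castSucc) *
        Tmon 𝕂 r m nn l (colOf r c hcr ⟨i, hi⟩ j.castSucc)) ∈
      RingHom.range (C : MvPolynomial {x // ¬ stepP r m nn i0 x} 𝕂 →+*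
        MvPolynomial {x // stepP r m nn i0 x}
          (MvPolynomial {x // ¬ stepP r m nn i0 x} 𝕂)) := by
    rw [map_sum]
    refine sum_mem fun j _ => ?_
    rw [map_mul, stepPhi_C]
    refine mul_mem ⟨C _, rfl⟩ (stepPhi_Tmon_ne 𝕂 r m nn l i0 _ ?_)
    intro hEq
    have hv := congrArg Fin.val hEq
    rw [colOf_val_le r c hcr _ _ (by simpa using Nat.le_of_lt_succ j.isLt)] at hv
    simp only [hi0, Fin.coe_castSucc] at hv
    have := j.isLt
    omega
  obtain ⟨b0, hb0⟩ := RingHom.mem_range.mp hsum_mem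
  have hgk : φ (g ⟨i, hi⟩) =
      C (C (kap 𝕂 r c hcr A ⟨i, hi⟩ (Fin.last (c + 1)))) * monomial (ddOf r m nn l i0) 1
        + C b0 := by
    rw [hgdef, gPoly_eq_sum, Fin.sum_univ_castSucc, map_add, ← hb0, map_mul, stepPhi_C,
      hTi0, stepPhi_Tmon_i0, add_comm]
  have hκ : kap 𝕂 r c hcr A ⟨i, hi⟩ (Fin.last (c + 1)) ≠ 0 := by
    rw [kap]
    apply mul_ne_zero (pow_ne_zero _ (neg_ne_zero.mpr one_ne_zero))
    have hMeq : (Matrix.of fun q p : Fin (c + 1) =>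
        A q (colOf r c hcr ⟨i, hi⟩ ((Fin.last (c + 1)).succAbove p)))
        = Matrix.of fun q p : Fin (c + 1) => A q (Fin.castLE (by omega) p) := by
      ext q p
      rw [Matrix.of_apply, Matrix.of_apply]
      congr 1
      apply Fin.ext
      rw [Fin.succAbove_last_apply,
        colOf_val_le r c hcr _ _ (by simpa using Nat.le_of_lt_succ p.isLt)]
      simp
    rw [hMeq]
    exact det_first_cols_ne_zero 𝕂 r c hcr A hA
  have hΨg : Ψ (Ideal.Quotient.mk _ (g ⟨i, hi⟩)) =
      C (Ideal.Quotient.mk I (C (kap 𝕂 r c hcr A ⟨i, hi⟩ (Fin.last (c + 1))))) *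
        monomial (ddOf r m nn l i0) 1 + C (Ideal.Quotient.mk I b0) := by
    rw [hΨdef, RingEquiv.trans_apply, Ideal.quotientEquiv_mk]
    have hconv : ((quotientEquivQuotientMvPolynomial I (σ := {x // stepP r m nn i0 x})).symm.toRingEquiv)
        ((Ideal.Quotient.mk (Ideal.map C I)) (φ (g ⟨i, hi⟩)))
        = (quotientEquivQuotientMvPolynomial I (σ := {x // stepP r m nn i0 x})).symm
            ((Ideal.Quotient.mk (Ideal.map C I)) (φ (g ⟨i, hi⟩))) := rfl
    rw [hconv, aux_qeq_symm, hgk, map_add, map_mul, MvPolynomial.map_C, MvPolynomial.map_C,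
      MvPolynomial.map_monomial, map_one]
  rw [hΨg]
  exact aux_mul_injective _ (ddOf_ne_zero r m nn l hnn hl i0)
    (((isUnit_iff_ne_zero.mpr hκ).map
        (C : 𝕂 →+* MvPolynomial {x // ¬ stepP r m nn i0 x} 𝕂)).map (Ideal.Quotient.mk I)) _

end Step

section Eval

lemma gPoly_eval_zero (𝕂 : Type) [Field 𝕂] (r c m : ℕ) (hcr : c ≤ r)
    (nn : Fin (r + 1) → ℕ) (hnn : ∀ i, 0 < nn i)
    (l : ∀ i : Fin (r + 1), Fin (nn i) → ℕ) (hl : ∀ i j, 0 < l i j)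
    (A : Matrix (Fin (c + 1)) (Fin (r + 1)) 𝕂) (t : Fin (r - c)) :
    eval (fun _ : VarIdx r m nn => (0 : 𝕂)) (gPoly 𝕂 r c m hcr nn l A t) = 0 := by
  rw [gPoly_eq_sum, map_sum]
  refine Finset.sum_eq_zero fun j _ => ?_
  rw [map_mul]
  have hT : eval (fun _ : VarIdx r m nn => (0 : 𝕂))
      (Tmon 𝕂 r m nn l (colOf r c hcr t j)) = 0 := by
    rw [Tmon, map_prod]
    refine Finset.prod_eq_zero (Finset.mem_univ (⟨0, hnn _⟩ : Fin (nn (colOf r c hcr t j)))) ?_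
    rw [map_pow, eval_X]
    exact zero_pow (hl _ _).ne'
  rw [hT, mul_zero]

end Eval

end AuxST3

/-- The polynomials `g_1, …, g_{r−c}` form a regular sequence in the
polynomial ring `𝕂[T_{ij},S_k]` (hence the quotient is a complete intersection ring). -/
theorem statement_3
    (𝕂 : Type) [Field 𝕂] [IsAlgClosed 𝕂] [CharZero 𝕂]
    (r c m : ℕ) (hc : 0 < c) (hcr : c ≤ r)
    (nn : Fin (r + 1) → ℕ) (hnn : ∀ i, 0 < nn i)
    (l : ∀ i : Fin (r + 1), Fin (nn i) → ℕ) (hl : ∀ i j, 0 < l i j)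
    (A : Matrix (Fin (c + 1)) (Fin (r + 1)) 𝕂)
    (hA : ∀ s : Finset (Fin (r + 1)), s.card = c + 1 →
      LinearIndependent 𝕂 fun j : s => A.transpose (j : Fin (r + 1)))
    :
    RingTheory.Sequence.IsRegular (MvPolynomial (VarIdx r m nn) 𝕂)
      (List.ofFn (gPoly 𝕂 r c m hcr nn l A)) := by
  constructor
  · rw [RingTheory.Sequence.isWeaklyRegular_iff]
    intro j hj
    have hj' : j < r - c := by simpa using hj
    simp only [List.getElem_ofFn]
    exact step_regular 𝕂 r c m hcr nn hnn l hl A hA j hj'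
  · intro hEq
    have e : (Ideal.ofList (List.ofFn (gPoly 𝕂 r c m hcr nn l A)) •
        (⊤ : Submodule (MvPolynomial (VarIdx r m nn) 𝕂) (MvPolynomial (VarIdx r m nn) 𝕂)))
        = Ideal.ofList (List.ofFn (gPoly 𝕂 r c m hcr nn l A)) := by
      rw [Ideal.smul_eq_mul, Ideal.mul_top]
    rw [e] at hEq
    have h1 : (1 : MvPolynomial (VarIdx r m nn) 𝕂) ∈
        Ideal.ofList (List.ofFn (gPoly 𝕂 r c m hcr nn l A)) := by
      rw [← hEq]; trivial
    have hle : Ideal.ofList (List.ofFn (gPoly 𝕂 r c m hcr nn l A)) ≤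
        RingHom.ker (eval (fun _ : VarIdx r m nn => (0 : 𝕂))) := by
      apply Ideal.span_le.mpr
      intro x hx
      rw [Set.mem_setOf_eq, List.mem_ofFn] at hx
      obtain ⟨t, rfl⟩ := hx
      exact RingHom.mem_ker.mpr (gPoly_eval_zero 𝕂 r c m hcr nn hnn l hl A t)
    have hker := hle h1
    rw [RingHom.mem_ker, map_one] at hker
    exact one_ne_zero hker
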